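/- The set of effects (probabilistic-equivalence classes of events) of a locally finite phenomenological theory, with ⊕ defined via disjoint union within a measurement and unit the class of full measurements, forms a weak effect algebra, and the induced functions ω^e on equivalence classes are states whose collection separates points of the effect set. -/

import Mathlib

/-- A locally finite phenomenological theory: a set of pairwise disjoint finite
measurements and a set of admissible states: `[0,1]`-valued functions on
outcomes summing to `1` on each measurement. -/
structure PhenTheory (X : Type*) where
  meas : Set (Finset X)
  disjoint : ∀ M ∈ meas, ∀ N ∈ meas, M ≠ N → Disjoint M N
  states : Set (X → ℝ)
  nonneg : ∀ ω ∈ states, ∀ x, 0 ≤ ω x ∧ ω x ≤ 1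
  sum_one : ∀ ω ∈ states, ∀ M ∈ meas, ∑ x ∈ M, ω x = 1

/-- An event: a subset of some measurement. -/
def Event {X : Type*} (P : PhenTheory X) : Type _ :=
  {a : Finset X // ∃ M ∈ P.meas, a ⊆ M}

/-- Probabilistic equivalence of events: equal probability in every state. -/
def eventSetoid {X : Type*} (P : PhenTheory X) : Setoid (Event P) where
  r a b := ∀ ω ∈ P.states, ∑ x ∈ a.1, ω x = ∑ x ∈ b.1, ω x
  iseqv := ⟨fun _ _ _ => rfl, fun h ω hω => (h ω hω).symm,
    fun h₁ h₂ ω hω => (h₁ ω hω).trans (h₂ ω hω)⟩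

/-- Effects: probabilistic-equivalence classes of events. -/
def Effect {X : Type*} (P : PhenTheory X) : Type _ := Quotient (eventSetoid P)

/-- A weak effect algebra: strong commutativity, weak associativity, unique
orthosupplements, and `a ⊕ 1` defined only for `a = 1'`. -/
structure WeakEffectAlgebra (E : Type*) where
  add : E → E → Option E
  one : E
  comm : ∀ a b, add a b = add b a
  wassoc : ∀ a b c ab bc l r, add a b = some ab → add b c = some bc →
    add ab c = some l → add a bc = some r → l = r
  orth : ∀ a, ∃! b, add a b = some one
  one_max : ∀ a b, add a one = some b → add a one = some one

/-- A state on a weak effect algebra. -/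
def IsWEAState {E : Type*} (A : WeakEffectAlgebra E) (ω : E → ℝ) : Prop :=
  (∀ a, ω a ∈ Set.Icc (0:ℝ) 1) ∧ ω A.one = 1 ∧
    ∀ a b c, A.add a b = some c → ω c = ω a + ω b

section Aux
set_option linter.unusedSectionVars false
attribute [local instance] Classical.propDecidable

variable {X : Type} [DecidableEq X] (P : PhenTheory X)

def mkE (a : Event P) : Effect P := Quotient.mk (eventSetoid P) a

noncomputable def fval (ω : X → ℝ) (hω : ω ∈ P.states) : Effect P → ℝ :=
  Quotient.lift (fun a : Event P => ∑ x ∈ a.1, ω x) (fun _ _ h => h ω hω)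

lemma fval_mk (ω : X → ℝ) (hω : ω ∈ P.states) (a : Event P) :
    fval P ω hω (mkE P a) = ∑ x ∈ a.1, ω x := rfl

lemma eff_eq_iff (e₁ e₂ : Effect P) :
    e₁ = e₂ ↔ ∀ ω (hω : ω ∈ P.states), fval P ω hω e₁ = fval P ω hω e₂ := by
  constructor
  · rintro rfl ω hω; rfl
  · induction e₁ using Quotient.inductionOn with | _ a =>
    induction e₂ using Quotient.inductionOn with | _ b =>
    intro h
    exact Quotient.sound (fun ω hω => h ω hω)

lemma fval_mem_Icc (ω : X → ℝ) (hω : ω ∈ P.states) (e : Effect P) :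
    fval P ω hω e ∈ Set.Icc (0:ℝ) 1 := by
  induction e using Quotient.inductionOn with | _ a =>
  obtain ⟨M, hM, haM⟩ := a.2
  constructor
  · exact Finset.sum_nonneg fun x _ => (P.nonneg ω hω x).1
  · calc fval P ω hω (Quotient.mk _ a) = ∑ x ∈ a.1, ω x := rfl
      _ ≤ ∑ x ∈ M, ω x :=
        Finset.sum_le_sum_of_subset_of_nonneg haM (fun x _ _ => (P.nonneg ω hω x).1)
      _ = 1 := P.sum_one ω hω M hM

def R (x y z : Effect P) : Prop :=
  ∃ (a b : Event P) (M : Finset X) (hM : M ∈ P.meas) (ha : a.1 ⊆ M) (hb : b.1 ⊆ M),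
    Disjoint a.1 b.1 ∧ x = mkE P a ∧ y = mkE P b ∧
    z = mkE P ⟨a.1 ∪ b.1, M, hM, Finset.union_subset ha hb⟩

lemma R_fval {x y z : Effect P} (h : R P x y z) (ω : X → ℝ) (hω : ω ∈ P.states) :
    fval P ω hω z = fval P ω hω x + fval P ω hω y := by
  obtain ⟨a, b, M, hM, ha, hb, hd, rfl, rfl, rfl⟩ := h
  exact Finset.sum_union hd

lemma R_unique {x y z z' : Effect P} (h : R P x y z) (h' : R P x y z') : z = z' := by
  rw [eff_eq_iff]
  intro ω hω
  rw [R_fval P h ω hω, R_fval P h' ω hω]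

lemma R_symm {x y z : Effect P} (h : R P x y z) : R P y x z := by
  obtain ⟨a, b, M, hM, ha, hb, hd, rfl, rfl, hz⟩ := h
  refine ⟨b, a, M, hM, hb, ha, hd.symm, rfl, rfl, ?_⟩
  rw [hz]
  congr 1
  exact Subtype.ext (Finset.union_comm _ _)

noncomputable def addE (x y : Effect P) : Option (Effect P) :=
  if h : ∃ z, R P x y z then some h.choose else none

lemma addE_eq_some_iff {x y z : Effect P} : addE P x y = some z ↔ R P x y z := by
  unfold addE
  constructor
  · intro h
    split at h
    · next hex => obtain rfl : hex.choose = z := Option.some.inj h; exact hex.choose_spec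
    · exact absurd h (by simp)
  · intro h
    have hex : ∃ z, R P x y z := ⟨z, h⟩
    rw [dif_pos hex]
    exact congrArg some (R_unique P hex.choose_spec h)

lemma addE_fval {x y z : Effect P} (h : addE P x y = some z) (ω : X → ℝ)
    (hω : ω ∈ P.states) : fval P ω hω z = fval P ω hω x + fval P ω hω y :=
  R_fval P ((addE_eq_some_iff P).1 h) ω hω

end Aux

/-- The effects of a locally finite phenomenological theory, with `⊕` induced
by disjoint union within a measurement and unit the class of full measurements,
form a weak effect algebra; the induced functions `ω^e` are states on it, and
their collection separates points of the effect set. -/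
theorem effects_form_weak_effect_algebra (X : Type) [DecidableEq X]
    (P : PhenTheory X) (hne : ∃ M, M ∈ P.meas) :
    ∃ A : WeakEffectAlgebra (Effect P),
      (∀ (M : Finset X) (hM : M ∈ P.meas),
        A.one = Quotient.mk (eventSetoid P) ⟨M, M, hM, Finset.Subset.refl M⟩) ∧
      (∀ (a b : Event P) (M : Finset X), M ∈ P.meas → a.1 ⊆ M → b.1 ⊆ M →
        Disjoint a.1 b.1 → ∃ c : Event P, c.1 = a.1 ∪ b.1 ∧
          A.add (Quotient.mk (eventSetoid P) a) (Quotient.mk (eventSetoid P) b)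
            = some (Quotient.mk (eventSetoid P) c)) ∧
      (∀ x y : Effect P, (A.add x y).isSome →
        ∃ (a b : Event P) (M : Finset X), M ∈ P.meas ∧ a.1 ⊆ M ∧ b.1 ⊆ M ∧
          Disjoint a.1 b.1 ∧ x = Quotient.mk (eventSetoid P) a ∧
          y = Quotient.mk (eventSetoid P) b) ∧
      (∀ ω ∈ P.states, ∃ f : Effect P → ℝ,
        (∀ a : Event P, f (Quotient.mk (eventSetoid P) a) = ∑ x ∈ a.1, ω x) ∧
        IsWEAState A f) ∧
      (∀ e₁ e₂ : Effect P, e₁ ≠ e₂ → ∃ ω ∈ P.states, ∃ f : Effect P → ℝ,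
        (∀ a : Event P, f (Quotient.mk (eventSetoid P) a) = ∑ x ∈ a.1, ω x) ∧
        f e₁ ≠ f e₂) := by
  classical
  obtain ⟨M₀, hM₀⟩ := hne
  set one : Effect P := mkE P ⟨M₀, M₀, hM₀, Finset.Subset.refl M₀⟩ with hone
  have hfone : ∀ ω (hω : ω ∈ P.states), fval P ω hω one = 1 := fun ω hω =>
    P.sum_one ω hω M₀ hM₀
  have hone_eq : ∀ (M : Finset X) (hM : M ∈ P.meas),
      one = Quotient.mk (eventSetoid P) ⟨M, M, hM, Finset.Subset.refl M⟩ := by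
    intro M hM
    apply (eff_eq_iff P _ _).2
    intro ω hω
    rw [hfone ω hω]
    exact (P.sum_one ω hω M hM).symm
  have hcomm : ∀ x y, addE P x y = addE P y x := by
    intro x y
    apply Option.ext
    intro z
    show addE P x y = some z ↔ addE P y x = some z
    rw [addE_eq_some_iff, addE_eq_some_iff]
    exact ⟨R_symm P, R_symm P⟩
  have hwassoc : ∀ a b c ab bc l r, addE P a b = some ab → addE P b c = some bc →
      addE P ab c = some l → addE P a bc = some r → l = r := by
    intro a b c ab bc l r hab hbc hl hr
    rw [eff_eq_iff]
    intro ω hω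
    rw [addE_fval P hl ω hω, addE_fval P hr ω hω, addE_fval P hab ω hω,
      addE_fval P hbc ω hω]
    ring
  have horth : ∀ x : Effect P, ∃! y, addE P x y = some one := by
    intro x
    induction x using Quotient.inductionOn with | _ a =>
    obtain ⟨M, hM, haM⟩ := a.2
    have hadd : addE P (Quotient.mk (eventSetoid P) a)
        (mkE P ⟨M \ a.1, M, hM, Finset.sdiff_subset⟩) = some one := by
      apply (addE_eq_some_iff P).2
      refine ⟨a, ⟨M \ a.1, M, hM, Finset.sdiff_subset⟩, M, hM, haM,
        Finset.sdiff_subset, Finset.disjoint_sdiff, rfl, rfl, ?_⟩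
      have hunion : a.1 ∪ (M \ a.1) = M := Finset.union_sdiff_of_subset haM
      rw [hone_eq M hM]
      exact congrArg (mkE P) (Subtype.ext hunion.symm)
    refine ⟨_, hadd, ?_⟩
    intro y hy
    rw [eff_eq_iff]
    intro ω hω
    have h1 := addE_fval P hy ω hω
    have h2 := addE_fval P hadd ω hω
    rw [hfone ω hω] at h1 h2
    linarith
  have honemax : ∀ x y, addE P x one = some y → addE P x one = some one := by
    intro x y h
    have hy : y = one := by
      rw [eff_eq_iff]
      intro ω hω
      have h1 := addE_fval P h ω hω
      have h2 := fval_mem_Icc P ω hω y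
      have h3 := fval_mem_Icc P ω hω x
      rw [hfone ω hω] at h1 ⊢
      simp only [Set.mem_Icc] at h2 h3
      linarith
    rwa [hy] at h
  refine ⟨⟨addE P, one, hcomm, hwassoc, horth, honemax⟩, hone_eq, ?_, ?_, ?_, ?_⟩
  · intro a b M hM ha hb hd
    refine ⟨⟨a.1 ∪ b.1, M, hM, Finset.union_subset ha hb⟩, rfl, ?_⟩
    show addE P _ _ = _
    apply (addE_eq_some_iff P).2
    exact ⟨a, b, M, hM, ha, hb, hd, rfl, rfl, rfl⟩
  · intro x y h
    obtain ⟨z, hz⟩ := Option.isSome_iff_exists.1 h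
    obtain ⟨a, b, M, hM, ha, hb, hd, hx, hy, -⟩ := (addE_eq_some_iff P).1 hz
    exact ⟨a, b, M, hM, ha, hb, hd, hx, hy⟩
  · intro ω hω
    refine ⟨fval P ω hω, fun a => rfl, fun e => fval_mem_Icc P ω hω e,
      hfone ω hω, fun a b c hc => addE_fval P hc ω hω⟩
  · intro e₁ e₂ hne'
    have : ¬ ∀ ω (hω : ω ∈ P.states), fval P ω hω e₁ = fval P ω hω e₂ :=
      fun h => hne' ((eff_eq_iff P e₁ e₂).2 h)
    push_neg at this
    obtain ⟨ω, hω, hd⟩ := this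
    exact ⟨ω, hω, fval P ω hω, fun a => rfl, hd⟩
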